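/- Let (t, ε) be a signed Schröder tree, let I be a subset of the set of leaves of t (identified with a subset of [|t|] via the canonical left-to-right labeling), and let (t_I, ε_I) be the induced signed subtree. Then pat_I(perm(t, ε)) = perm(t_I, ε_I); that is, the pattern of the permutation of the tree induced by the leaves in I equals the permutation of the induced subtree. -/

import Mathlib

/-- Signed plane trees: a leaf, or an internal vertex carrying a sign
(`true` = `+`, `false` = `-`) with an ordered list of subtrees. -/
inductive STree where
  | leaf : STree
  | node : Bool → List STree → STree

/-- Number of leaves. -/
def STree.nleaves : STree → ℕ
  | .leaf => 1
  | .node _ cs => (cs.attach.map (fun c => STree.nleaves c.1)).sum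
decreasing_by simp_wf; have := List.sizeOf_lt_of_mem c.2; omega

/-- Direct sum of two permutations in one-line notation. -/
def oplus (a b : List ℕ) : List ℕ := a ++ b.map (· + a.length)

/-- Skew sum of two permutations in one-line notation. -/
def ominus (a b : List ℕ) : List ℕ := a.map (· + b.length) ++ b

/-- The permutation (in one-line notation, values `1,…,n`) associated with a signed tree:
a leaf gives `[1]`; a `+`-signed vertex gives the direct sum of its children's permutations,
a `-`-signed vertex their skew sum. -/
def STree.permOf : STree → List ℕ
  | .leaf => [1]
  | .node s cs => (cs.attach.map (fun c => STree.permOf c.1)).foldr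
      (if s then oplus else ominus) []
decreasing_by simp_wf; have := List.sizeOf_lt_of_mem c.2; omega

/-- Subsequence of a list given by a set of (0-indexed) positions. -/
def subseqAt (l : List ℕ) (I : Finset ℕ) : List ℕ :=
  ((List.range l.length).filter (· ∈ I)).map (fun i => l.getD i 0)

/-- Standardization of a list of distinct values: each value is replaced by its rank
(1-indexed) among the values of the list. -/
def List.std (l : List ℕ) : List ℕ := l.map (fun x => (l.filter (· < x)).length + 1)

/-- The pattern of the permutation `l` (one-line notation) induced by the set `I`
of (0-indexed) positions. -/
def patL (l : List ℕ) (I : Finset ℕ) : List ℕ := (subseqAt l I).std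

mutual
/-- The (signed) subtree of a signed tree induced by a set `I` of (0-indexed) leaves:
its leaves are the elements of `I`, its internal vertices are the common ancestors of
pairs of leaves in `I`, with inherited ancestor relation, child order and signs. -/
def STree.induced : STree → Finset ℕ → STree
  | .leaf, _ => .leaf
  | .node s cs, I =>
      match STree.inducedList cs I with
      | [t] => t
      | ts => .node s ts

/-- Helper: induced subtrees of the children containing at least one selected leaf,
where leaves are indexed from left to right across the whole forest. -/
def STree.inducedList : List STree → Finset ℕ → List STree
  | [], _ => []
  | c :: rest, I =>
      (if (I.filter (· < c.nleaves)).Nonempty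
        then [STree.induced c (I.filter (· < c.nleaves))] else []) ++
      STree.inducedList rest ((I.filter (c.nleaves ≤ ·)).image (· - c.nleaves))
end

/-! ### Auxiliary lemmas -/

lemma std_length (l : List ℕ) : l.std.length = l.length := by simp [List.std]

lemma patL_empty (l : List ℕ) : patL l (∅ : Finset ℕ) = [] := by
  simp [patL, subseqAt, List.std]

lemma subseqAt_mem {l : List ℕ} {I : Finset ℕ} {x : ℕ} (hx : x ∈ subseqAt l I) : x ∈ l := by
  simp only [subseqAt, List.mem_map, List.mem_filter, List.mem_range] at hx
  obtain ⟨i, ⟨hi, _⟩, rfl⟩ := hx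
  rw [List.getD_eq_getElem _ _ hi]
  exact List.getElem_mem hi

lemma std_map_add (l : List ℕ) (c : ℕ) : (l.map (· + c)).std = l.std := by
  simp only [List.std, List.map_map]
  apply List.map_congr_left
  intro a _
  simp only [Function.comp]
  congr 1
  rw [List.filter_map]
  rw [List.length_map]
  congr 1
  apply List.filter_congr
  intro b _
  simp

lemma std_append_lt {x y : List ℕ} (h : ∀ u ∈ x, ∀ v ∈ y, u < v) :
    (x ++ y).std = oplus x.std y.std := by
  simp only [List.std, oplus, List.map_append, List.filter_append, List.length_map, List.map_map]
  congr 1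
  · apply List.map_congr_left
    intro a ha
    have hy : y.filter (· < a) = [] := by
      apply List.filter_eq_nil_iff.2
      intro v hv
      simpa using Nat.not_lt.2 (le_of_lt (h a ha v hv))
    rw [hy]
    simp
  · apply List.map_congr_left
    intro a ha
    have hx : x.filter (· < a) = x := by
      apply List.filter_eq_self.2
      intro u hu
      simpa using h u hu a ha
    rw [hx]
    simp only [List.length_append, Function.comp]
    omega

lemma std_append_gt {x y : List ℕ} (h : ∀ u ∈ x, ∀ v ∈ y, v < u) :
    (x ++ y).std = ominus x.std y.std := by
  simp only [List.std, ominus, List.map_append, List.filter_append, List.length_map, List.map_map]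
  congr 1
  · apply List.map_congr_left
    intro a ha
    have hy : y.filter (· < a) = y := by
      apply List.filter_eq_self.2
      intro v hv
      simpa using h a ha v hv
    rw [hy]
    simp only [List.length_append, Function.comp]
    omega
  · apply List.map_congr_left
    intro a ha
    have hx : x.filter (· < a) = [] := by
      apply List.filter_eq_nil_iff.2
      intro u hu
      simpa using Nat.not_lt.2 (le_of_lt (h u hu a ha))
    rw [hx]
    simp

lemma subseqAt_map_add (l : List ℕ) (c : ℕ) (I : Finset ℕ) :
    subseqAt (l.map (· + c)) I = (subseqAt l I).map (· + c) := by
  simp only [subseqAt, List.length_map, List.map_map]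
  apply List.map_congr_left
  intro i hi
  simp only [List.mem_filter, List.mem_range] at hi
  simp only [Function.comp]
  rw [List.getD_eq_getElem _ _ (by simpa using hi.1), List.getD_eq_getElem _ _ hi.1]
  simp

lemma subseqAt_append (a b : List ℕ) (I : Finset ℕ) :
    subseqAt (a ++ b) I =
      subseqAt a (I.filter (· < a.length)) ++
      subseqAt b ((I.filter (a.length ≤ ·)).image (· - a.length)) := by
  simp only [subseqAt, List.length_append, List.range_add, List.filter_append, List.map_append,
    List.filter_map, List.map_map]
  congr 1
  · have hr : (List.range a.length).filter (· ∈ I) =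
        (List.range a.length).filter (· ∈ I.filter (· < a.length)) := by
      apply List.filter_congr
      intro i hi
      simp only [List.mem_range] at hi
      simp [Finset.mem_filter, hi]
    rw [← hr]
    apply List.map_congr_left
    intro i hi
    simp only [List.mem_filter, List.mem_range] at hi
    rw [List.getD_eq_getElem _ _ (by simp; omega), List.getD_eq_getElem _ _ hi.1]
    exact List.getElem_append_left hi.1
  · have hr : (List.range b.length).filter ((· ∈ I) ∘ (fun x => a.length + x)) =
        (List.range b.length).filter (· ∈ (I.filter (a.length ≤ ·)).image (· - a.length)) := by
      apply List.filter_congr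
      intro i hi
      simp only [Function.comp, decide_eq_decide, Finset.mem_image, Finset.mem_filter]
      constructor
      · intro hmem
        exact ⟨a.length + i, ⟨hmem, Nat.le_add_right _ _⟩, by omega⟩
      · rintro ⟨j, ⟨hj, hja⟩, rfl⟩
        have : a.length + (j - a.length) = j := by omega
        rwa [this]
    rw [← hr]
    apply List.map_congr_left
    intro i hi
    simp only [List.mem_filter, List.mem_range] at hi
    simp only [Function.comp]
    rw [List.getD_eq_getElem _ _ (by simp; omega), List.getD_eq_getElem _ _ hi.1]
    rw [List.getElem_append_right (by omega)]
    congr 1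
    omega

/-- `l` is a permutation-like list: all values between `1` and its length. -/
def PL (l : List ℕ) : Prop := ∀ x ∈ l, 1 ≤ x ∧ x ≤ l.length

lemma oplus_length (a b : List ℕ) : (oplus a b).length = a.length + b.length := by
  simp [oplus]

lemma ominus_length (a b : List ℕ) : (ominus a b).length = a.length + b.length := by
  simp [ominus]

lemma PL_oplus {a b : List ℕ} (ha : PL a) (hb : PL b) : PL (oplus a b) := by
  intro x hx
  rw [oplus_length]
  simp only [oplus, List.mem_append, List.mem_map] at hx
  rcases hx with h | ⟨y, hy, rfl⟩
  · have := ha x h; omega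
  · have := hb y hy; omega

lemma PL_ominus {a b : List ℕ} (ha : PL a) (hb : PL b) : PL (ominus a b) := by
  intro x hx
  rw [ominus_length]
  simp only [ominus, List.mem_append, List.mem_map] at hx
  rcases hx with ⟨y, hy, rfl⟩ | h
  · have := ha y hy; omega
  · have := hb x h; omega

lemma PL_op (s : Bool) {a b : List ℕ} (ha : PL a) (hb : PL b) :
    PL ((if s then oplus else ominus) a b) := by
  cases s
  · exact PL_ominus ha hb
  · exact PL_oplus ha hb

lemma op_length (s : Bool) (a b : List ℕ) :
    ((if s then oplus else ominus) a b).length = a.length + b.length := by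
  cases s
  · exact ominus_length a b
  · exact oplus_length a b

lemma op_nil_right (s : Bool) (a : List ℕ) : (if s then oplus else ominus) a [] = a := by
  cases s <;> simp [oplus, ominus]

lemma op_nil_left (s : Bool) (b : List ℕ) : (if s then oplus else ominus) [] b = b := by
  cases s <;> simp [oplus, ominus]

lemma patL_oplus (a b : List ℕ) (ha : PL a) (hb : PL b) (I : Finset ℕ) :
    patL (oplus a b) I = oplus (patL a (I.filter (· < a.length)))
      (patL b ((I.filter (a.length ≤ ·)).image (· - a.length))) := by
  unfold patL
  have h1 : subseqAt (oplus a b) I =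
      subseqAt a (I.filter (· < a.length)) ++
      (subseqAt b ((I.filter (a.length ≤ ·)).image (· - a.length))).map (· + a.length) := by
    show subseqAt (a ++ b.map (· + a.length)) I = _
    rw [subseqAt_append, subseqAt_map_add]
  rw [h1]
  rw [std_append_lt]
  · rw [std_map_add]
  · intro u hu v hv
    simp only [List.mem_map] at hv
    obtain ⟨w, hw, rfl⟩ := hv
    have h2 := (ha u (subseqAt_mem hu)).2
    have h3 := (hb w (subseqAt_mem hw)).1
    omega

lemma patL_ominus (a b : List ℕ) (ha : PL a) (hb : PL b) (I : Finset ℕ) :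
    patL (ominus a b) I = ominus (patL a (I.filter (· < a.length)))
      (patL b ((I.filter (a.length ≤ ·)).image (· - a.length))) := by
  unfold patL
  have h1 : subseqAt (ominus a b) I =
      (subseqAt a (I.filter (· < a.length))).map (· + b.length) ++
      subseqAt b ((I.filter (a.length ≤ ·)).image (· - a.length)) := by
    show subseqAt (a.map (· + b.length) ++ b) I = _
    rw [subseqAt_append, subseqAt_map_add, List.length_map]
  rw [h1]
  rw [std_append_gt]
  · rw [std_map_add]
  · intro u hu v hv
    simp only [List.mem_map] at hu
    obtain ⟨w, hw, rfl⟩ := hu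
    have h2 := (ha w (subseqAt_mem hw)).1
    have h3 := (hb v (subseqAt_mem hv)).2
    omega

lemma patL_op (s : Bool) (a b : List ℕ) (ha : PL a) (hb : PL b) (I : Finset ℕ) :
    patL ((if s then oplus else ominus) a b) I =
      (if s then oplus else ominus) (patL a (I.filter (· < a.length)))
        (patL b ((I.filter (a.length ≤ ·)).image (· - a.length))) := by
  cases s
  · exact patL_ominus a b ha hb I
  · exact patL_oplus a b ha hb I

lemma permOf_node (s : Bool) (cs : List STree) :
    (STree.node s cs).permOf = (cs.map STree.permOf).foldr (if s then oplus else ominus) [] := by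
  rw [STree.permOf]
  congr 1
  exact List.attach_map_val (l := cs) (f := STree.permOf)

lemma nleaves_node (s : Bool) (cs : List STree) :
    (STree.node s cs).nleaves = (cs.map STree.nleaves).sum := by
  rw [STree.nleaves]
  congr 1
  exact List.attach_map_val (l := cs) (f := STree.nleaves)

mutual
theorem perm_spec (t : STree) : PL t.permOf ∧ t.permOf.length = t.nleaves := by
  match t with
  | .leaf =>
    constructor
    · intro x hx
      rw [STree.permOf] at hx ⊢
      simp at hx
      simp [hx]
    · rw [STree.permOf, STree.nleaves]
      simp
  | .node s cs =>
    rw [permOf_node, nleaves_node]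
    exact fold_spec s cs
termination_by sizeOf t

theorem fold_spec (s : Bool) (cs : List STree) :
    PL ((cs.map STree.permOf).foldr (if s then oplus else ominus) []) ∧
    ((cs.map STree.permOf).foldr (if s then oplus else ominus) []).length
      = (cs.map STree.nleaves).sum := by
  match cs with
  | [] =>
    constructor
    · intro x hx; simp at hx
    · simp
  | c :: rest =>
    have hc := perm_spec c
    have hr := fold_spec s rest
    simp only [List.map_cons, List.foldr_cons, List.sum_cons]
    constructor
    · exact PL_op s hc.1 hr.1
    · rw [op_length, hc.2, hr.2]
termination_by sizeOf cs
end

mutual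
theorem main_aux (t : STree) (I : Finset ℕ)
    (hI : ∀ x ∈ I, x < t.nleaves) (hne : I.Nonempty) :
    patL t.permOf I = (t.induced I).permOf := by
  match t with
  | .leaf =>
    obtain ⟨x, hx⟩ := hne
    have hx1 : x < STree.leaf.nleaves := hI x hx
    rw [STree.nleaves] at hx1
    have hx0 : (0 : ℕ) ∈ I := by
      have : x = 0 := by omega
      rwa [this] at hx
    rw [STree.permOf]
    rw [show STree.induced .leaf I = .leaf from by rw [STree.induced]]
    rw [STree.permOf]
    have hr : List.range 1 = [0] := rfl
    simp [patL, subseqAt, List.std, hx0, hr]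
  | .node s cs =>
    rw [permOf_node, list_aux s cs I]
    rw [STree.induced]
    rcases h : STree.inducedList cs I with _ | ⟨t1, _ | ⟨t2, ts⟩⟩
    · simp [permOf_node]
    · simp [op_nil_right]
    · rw [permOf_node]
termination_by sizeOf t

theorem list_aux (s : Bool) (cs : List STree) (I : Finset ℕ) :
    patL ((cs.map STree.permOf).foldr (if s then oplus else ominus) []) I
      = ((STree.inducedList cs I).map STree.permOf).foldr (if s then oplus else ominus) [] := by
  match cs with
  | [] =>
    rw [show STree.inducedList [] I = [] from by rw [STree.inducedList]]
    simp [patL, subseqAt, List.std]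
  | c :: rest =>
    simp only [List.map_cons, List.foldr_cons]
    rw [patL_op s _ _ (perm_spec c).1 (fold_spec s rest).1, (perm_spec c).2]
    rw [STree.inducedList]
    by_cases hne1 : (I.filter (· < c.nleaves)).Nonempty
    · rw [main_aux c _ (fun x hx => (Finset.mem_filter.1 hx).2) hne1]
      rw [list_aux s rest ((I.filter (c.nleaves ≤ ·)).image (· - c.nleaves))]
      simp [hne1]
    · rw [Finset.not_nonempty_iff_eq_empty.1 hne1, patL_empty, op_nil_left]
      rw [list_aux s rest ((I.filter (c.nleaves ≤ ·)).image (· - c.nleaves))]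
      simp [hne1, Finset.not_nonempty_iff_eq_empty.1 hne1]
termination_by sizeOf cs
end


/-- For a signed Schröder tree `t` (with signs) and a nonempty subset `I` of its leaves,
the pattern of `perm t` at the positions `I` equals the permutation associated with
the induced signed subtree: `pat_I (perm t) = perm (t_I)`. -/

theorem pat_perm_eq_perm_induced (t : STree) (I : Finset ℕ)
    (hI : ∀ x ∈ I, x < t.nleaves) (hne : I.Nonempty) :
    patL t.permOf I = (t.induced I).permOf :=
  main_aux t I hI hne
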